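/- Lifting of exponential preservation along a weak equivalence: let C, D, E be cartesian closed categories, G : C ⥤ D fully faithful and essentially surjective preserving finite products, F : C ⥤ E a cartesian closed functor (preserving finite products and exponentials), H : D ⥤ E preserving finite products, and α : G ⋙ H ≅ F a natural isomorphism. Then H preserves exponentials, i.e., for all x, y : D the canonical comparison map H(y^x) ⟶ (H y)^(H x) is an isomorphism. -/

import Mathlib

open CategoryTheory CategoryTheory.Limits CategoryTheory.CartesianClosed MonoidalClosed
open MonoidalCategory CartesianMonoidalCategory

noncomputable section

namespace WeakEquivLift

variable {C : Type*} [Category C] {D : Type*} [Category D] {E : Type*} [Category E]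
variable [CartesianMonoidalCategory C] [CartesianMonoidalCategory D] [CartesianMonoidalCategory E]

/-- compatibility of `prodComparison` with a natural transformation. -/
lemma prodComparison_natTrans {F₁ F₂ : C ⥤ D} (τ : F₁ ⟶ F₂) (A B : C) :
    τ.app (A ⊗ B) ≫ CartesianMonoidalCategory.prodComparison F₂ A B =
      CartesianMonoidalCategory.prodComparison F₁ A B ≫ (τ.app A ⊗ₘ τ.app B) := by
  unfold CartesianMonoidalCategory.prodComparison
  apply CartesianMonoidalCategory.hom_ext <;> simp [τ.naturality]

variable [MonoidalClosed C] [MonoidalClosed D] [MonoidalClosed E]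

/-- Pointwise form of the composition law for exponential comparisons. -/
lemma expComparison_comp_app (F₁ : C ⥤ D) (F₂ : D ⥤ E)
    [PreservesLimitsOfShape (Discrete WalkingPair) F₁]
    [PreservesLimitsOfShape (Discrete WalkingPair) F₂] (a b : C) :
    (expComparison (F₁ ⋙ F₂) a).natTrans.app b =
      F₂.map ((expComparison F₁ a).natTrans.app b) ≫
        (expComparison F₂ (F₁.obj a)).natTrans.app (F₁.obj b) := by
  apply uncurry_injective
  rw [uncurry_expComparison, uncurry_natural_left, uncurry_expComparison]
  simp only [Functor.comp_obj, Functor.comp_map]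
  have h1 : (F₂.obj (F₁.obj a) ◁ F₂.map ((expComparison F₁ a).natTrans.app b)) ≫
      inv (CartesianMonoidalCategory.prodComparison F₂ (F₁.obj a) (F₁.obj a ⟹ F₁.obj b)) =
      inv (CartesianMonoidalCategory.prodComparison F₂ (F₁.obj a) (F₁.obj (a ⟹ b))) ≫
        F₂.map (F₁.obj a ◁ (expComparison F₁ a).natTrans.app b) := by
    rw [prodComparison_inv_natural_whiskerLeft]
    rfl
  rw [reassoc_of% h1, ← F₂.map_comp, ← uncurry_eq, uncurry_expComparison,
    IsIso.inv_comp_eq, CartesianMonoidalCategory.prodComparison_comp]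
  simp [← F₂.map_comp]

/-- Pointwise invariance of the exponential comparison under natural isomorphism. -/
lemma expComparison_natIso_app {F₁ F₂ : C ⥤ D} (α : F₁ ≅ F₂)
    [PreservesLimitsOfShape (Discrete WalkingPair) F₁]
    [PreservesLimitsOfShape (Discrete WalkingPair) F₂] (a b : C) :
    α.hom.app (a ⟹ b) ≫ (expComparison F₂ a).natTrans.app b =
      (expComparison F₁ a).natTrans.app b ≫ (ihom (F₁.obj a)).map (α.hom.app b) ≫
        (pre (α.inv.app a)).app (F₂.obj b) := by
  apply uncurry_injective
  rw [uncurry_natural_left, uncurry_expComparison, uncurry_natural_left,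
    uncurry_natural_left, uncurry_pre, ← MonoidalCategory.whiskerLeft_comp_assoc,
    whisker_exchange_assoc, ← uncurry_eq, uncurry_natural_right, uncurry_expComparison]
  -- naturality of α on the evaluation map
  have hev : F₁.map ((ihom.ev a).app b) ≫ α.hom.app b =
      α.hom.app (a ⊗ (a ⟹ b)) ≫ F₂.map ((ihom.ev a).app b) := α.hom.naturality _
  -- compatibility of prodComparison with α
  have hpc : α.hom.app (a ⊗ (a ⟹ b)) ≫ CartesianMonoidalCategory.prodComparison F₂ a (a ⟹ b) =
      CartesianMonoidalCategory.prodComparison F₁ a (a ⟹ b) ≫ (α.hom.app a ⊗ₘ α.hom.app (a ⟹ b)) :=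
    prodComparison_natTrans α.hom a (a ⟹ b)
  have hpc' : inv (CartesianMonoidalCategory.prodComparison F₁ a (a ⟹ b)) ≫ α.hom.app (a ⊗ (a ⟹ b)) =
      (α.hom.app a ⊗ₘ α.hom.app (a ⟹ b)) ≫
        inv (CartesianMonoidalCategory.prodComparison F₂ a (a ⟹ b)) := by
    rw [IsIso.eq_comp_inv, Category.assoc, IsIso.inv_comp_eq, hpc]
  rw [Category.assoc, hev, reassoc_of% hpc']
  have hw : (α.inv.app a ▷ F₁.obj (a ⟹ b)) ≫ (α.hom.app a ⊗ₘ α.hom.app (a ⟹ b)) =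
      F₂.obj a ◁ α.hom.app (a ⟹ b) := by
    rw [MonoidalCategory.tensorHom_def]
    simp [← MonoidalCategory.comp_whiskerRight_assoc]
  rw [reassoc_of% hw]

end WeakEquivLift

open WeakEquivLift

/-- Lifting of exponential preservation along a weak equivalence: if `F = G ⋙ H`
(up to natural isomorphism) is cartesian closed and `G` is a weak equivalence,
then `H` is a cartesian closed functor, i.e. all exponential comparison maps of
`H` are isomorphisms. -/
theorem weak_equiv_lifts_preserves_exponentials
    {C : Type*} [Category C] {D : Type*} [Category D] {E : Type*} [Category E]
    [CartesianMonoidalCategory C] [CartesianMonoidalCategory D] [CartesianMonoidalCategory E]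
    [MonoidalClosed C] [MonoidalClosed D] [MonoidalClosed E]
    (G : C ⥤ D) [G.Full] [G.Faithful] [G.EssSurj]
    [PreservesLimitsOfShape (Discrete WalkingPair) G]
    (F : C ⥤ E) [PreservesLimitsOfShape (Discrete WalkingPair) F]
    [MonoidalClosedFunctor F]
    (H : D ⥤ E) [PreservesLimitsOfShape (Discrete WalkingPair) H]
    (α : G ⋙ H ≅ F) :
    MonoidalClosedFunctor H := by
  haveI : G.IsEquivalence := { }
  haveI hG : MonoidalClosedFunctor G :=
    cartesianClosedFunctorOfLeftAdjointPreservesBinaryProducts G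
      G.asEquivalence.symm.toAdjunction
  -- key step: components of `expComparison H` at objects in the image of `G` are isos
  have key : ∀ a b : C, IsIso ((expComparison H (G.obj a)).natTrans.app (G.obj b)) := by
    intro a b
    have hcomp := expComparison_comp_app G H a b
    have hiso := expComparison_natIso_app α a b
    haveI : IsIso ((expComparison F a).natTrans.app b) := inferInstance
    haveI : IsIso ((pre (α.inv.app a)).app (F.obj b)) := by
      haveI : IsIso (pre (α.inv.app a)) := by
        refine ⟨pre (α.hom.app a), ?_, ?_⟩ <;>
          rw [← pre_map] <;> simp [pre_id]
      infer_instance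
    have : IsIso ((expComparison (G ⋙ H) a).natTrans.app b ≫
        (ihom ((G ⋙ H).obj a)).map (α.hom.app b) ≫ (pre (α.inv.app a)).app (F.obj b)) := by
      rw [← hiso]; infer_instance
    haveI : IsIso ((expComparison (G ⋙ H) a).natTrans.app b) :=
      IsIso.of_isIso_comp_right _
        ((ihom ((G ⋙ H).obj a)).map (α.hom.app b) ≫ (pre (α.inv.app a)).app (F.obj b))
    rw [hcomp] at this
    exact IsIso.of_isIso_comp_left (H.map ((expComparison G a).natTrans.app b)) _
  constructor
  intro A
  suffices h : ∀ B, IsIso ((expComparison H A).natTrans.app B) by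
    exact NatIso.isIso_of_isIso_app _
  intro B
  obtain ⟨a, ⟨eA⟩⟩ : ∃ a, Nonempty (G.obj a ≅ A) := ⟨_, ⟨G.objObjPreimageIso A⟩⟩
  obtain ⟨b, ⟨eB⟩⟩ : ∃ b, Nonempty (G.obj b ≅ B) := ⟨_, ⟨G.objObjPreimageIso B⟩⟩
  haveI := key a b
  -- transport along eB using naturality of `expComparison H A`
  have hB : IsIso ((expComparison H A).natTrans.app (G.obj b)) → IsIso ((expComparison H A).natTrans.app B) := by
    intro h
    have := (expComparison H A).natTrans.naturality eB.hom
    have : (expComparison H A).natTrans.app B =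
        inv ((ihom A ⋙ H).map eB.hom) ≫ (expComparison H A).natTrans.app (G.obj b) ≫
          (H ⋙ ihom (H.obj A)).map eB.hom := by
      rw [IsIso.eq_inv_comp, this]
    rw [this]; infer_instance
  apply hB
  -- transport along eA using `expComparison_whiskerLeft`
  haveI : IsIso (pre eA.hom) := by
    refine ⟨pre eA.inv, ?_, ?_⟩ <;>
      rw [← pre_map] <;> simp [pre_id]
  haveI : IsIso (pre (H.map eA.hom)) := by
    refine ⟨pre (H.map eA.inv), ?_, ?_⟩ <;>
      rw [← pre_map, ← H.map_comp] <;> simp [pre_id]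
  have hnat := congrArg (fun (τ : TwoSquare (ihom A) H H (ihom (H.obj (G.obj a))))
      => τ.app (G.obj b)) (expComparison_whiskerLeft H eA.hom)
  simp only [TwoSquare.whiskerBottom_app, TwoSquare.whiskerTop_app, NatTrans.comp_app, Functor.whiskerLeft_app, Functor.whiskerRight_app] at hnat
  -- hnat : (expComparison H A).natTrans.app (G b) ≫ (pre (H.map eA.hom)).app _ =
  --        H.map ((pre eA.hom).app (G b)) ≫ (expComparison H (G a)).natTrans.app (G b)
  have : IsIso ((expComparison H A).natTrans.app (G.obj b) ≫
      (pre (H.map eA.hom)).app (H.obj (G.obj b))) := by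
    rw [hnat]; infer_instance
  exact IsIso.of_isIso_comp_right _ ((pre (H.map eA.hom)).app (H.obj (G.obj b)))
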